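/- In a flow network, the maximum value of an s-t preflow is equal to the maximum value of an s-t flow: the supremum of |x| over all preflows x equals the supremum of |x| over all flows x (both sets of values are nonempty, since the zero function is both a flow and a preflow). -/

import Mathlib

open Finset

variable {V : Type*}

/-- The excess of node `v` under `x`: total inflow minus total outflow. -/
def excess [Fintype V] (x : V → V → ℝ) (v : V) : ℝ :=
  (∑ j, x j v) - ∑ j, x v j

/-- `x` is capacity-feasible for capacities `u`: `0 ≤ x i j ≤ u i j` on distinct pairs. -/
def IsCapFeasible (u x : V → V → ℝ) : Prop :=
  ∀ i j, i ≠ j → 0 ≤ x i j ∧ x i j ≤ u i j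

/-- A preflow: capacity-feasible with nonnegative excess at every node other than `s`. -/
def IsPreflow [Fintype V] (u : V → V → ℝ) (s : V) (x : V → V → ℝ) : Prop :=
  IsCapFeasible u x ∧ ∀ v, v ≠ s → 0 ≤ excess x v

/-- A flow: capacity-feasible with zero excess at every node other than `s` and `t`. -/
def IsFlow [Fintype V] (u : V → V → ℝ) (s t : V) (x : V → V → ℝ) : Prop :=
  IsCapFeasible u x ∧ ∀ v, v ≠ s → v ≠ t → excess x v = 0

/-- Residual capacity of the pair `(i,j)` with respect to `x`. -/
def res (u x : V → V → ℝ) (i j : V) : ℝ := u i j + x j i - x i j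

/-- A labeling `d` is valid w.r.t. `x`: `d t = 0` and `d i ≤ d j + 1` across residual arcs. -/
def IsValidLabeling [Fintype V] (u x : V → V → ℝ) (t : V) (d : V → ℕ) : Prop :=
  d t = 0 ∧ ∀ i j, i ≠ j → 0 < res u x i j → d i ≤ d j + 1

section Dec
variable [Fintype V] [DecidableEq V]
set_option linter.unusedSectionVars false

def tweak (ε : ℝ) (a b : V) (y : V → V → ℝ) : V → V → ℝ :=
  fun i j => y i j - if i = a ∧ j = b then ε else 0

lemma tweak_le {ε : ℝ} (hε : 0 ≤ ε) (a b : V) (y : V → V → ℝ) (i j : V) :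
    tweak ε a b y i j ≤ y i j := by
  unfold tweak; split <;> linarith

lemma le_tweak {ε : ℝ} (hε : 0 ≤ ε) (a b : V) (y : V → V → ℝ) (i j : V) :
    y i j - ε ≤ tweak ε a b y i j := by
  unfold tweak; split <;> linarith

lemma excess_tweak (ε : ℝ) (a b : V) (y : V → V → ℝ) (w : V) :
    excess (tweak ε a b y) w
      = excess y w + (if w = a then ε else 0) - (if w = b then ε else 0) := by
  unfold excess tweak
  have h1 : (∑ j, (y j w - if j = a ∧ w = b then ε else 0))
      = (∑ j, y j w) - (if w = b then ε else 0) := by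
    rw [Finset.sum_sub_distrib]
    congr 1
    by_cases hw : w = b
    · simp [hw, Finset.sum_ite_eq']
    · simp [hw]
  have h2 : (∑ j, (y w j - if w = a ∧ j = b then ε else 0))
      = (∑ j, y w j) - (if w = a then ε else 0) := by
    rw [Finset.sum_sub_distrib]
    congr 1
    by_cases hw : w = a
    · simp [hw, Finset.sum_ite_eq']
    · simp [hw]
  rw [h1, h2]; ring

lemma total_tweak (ε : ℝ) (a b : V) (y : V → V → ℝ) :
    ∑ i, ∑ j, tweak ε a b y i j = (∑ i, ∑ j, y i j) - ε := by
  unfold tweak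
  simp only [Finset.sum_sub_distrib]
  congr 1
  have : ∀ i : V, (∑ j, if i = a ∧ j = b then ε else 0) = if i = a then ε else 0 := by
    intro i
    by_cases hi : i = a
    · simp [hi, Finset.sum_ite_eq']
    · simp [hi]
  simp only [this, Finset.sum_ite_eq', Finset.mem_univ, if_true]

def dec (ε : ℝ) : V → List V → (V → V → ℝ) → (V → V → ℝ)
  | _, [], y => y
  | a, b :: l, y => dec ε b l (tweak ε a b y)

lemma dec_le {ε : ℝ} (hε : 0 ≤ ε) :
    ∀ (l : List V) (a : V) (y : V → V → ℝ) (i j : V), dec ε a l y i j ≤ y i j := by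
  intro l
  induction l with
  | nil => intro a y i j; simp [dec]
  | cons b l ih =>
      intro a y i j
      calc dec ε a (b :: l) y i j = dec ε b l (tweak ε a b y) i j := rfl
        _ ≤ tweak ε a b y i j := ih b _ i j
        _ ≤ y i j := tweak_le hε a b y i j

lemma dec_nonneg {ε : ℝ} (hε : 0 ≤ ε) :
    ∀ (l : List V) (a : V) (y : V → V → ℝ),
      List.Chain (fun p q => ε * l.length ≤ y p q) a l →
      (∀ i j, 0 ≤ y i j) → ∀ i j, 0 ≤ dec ε a l y i j := by
  intro l
  induction l with
  | nil => intro a y _ hy i j; simpa [dec] using hy i j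
  | cons b l ih =>
      intro a y hch hy i j
      rcases hch with _ | _ | ⟨hab, hch⟩
      show 0 ≤ dec ε b l (tweak ε a b y) i j
      apply ih b (tweak ε a b y)
      · refine hch.imp ?_
        intro p q hpq
        have := le_tweak (ε := ε) hε a b y p q
        have hlen : (ε : ℝ) * (b :: l).length = ε * l.length + ε := by
          simp [List.length_cons]; ring
        rw [hlen] at hpq
        linarith
      · intro p q
        have h := hy p q
        unfold tweak
        split
        · rename_i h'
          rw [h'.1, h'.2]
          have hlen : (ε : ℝ) * (b :: l).length = ε * l.length + ε := by
            simp [List.length_cons]; ring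
          rw [hlen] at hab
          have : 0 ≤ ε * l.length := by positivity
          linarith
        · linarith

lemma dec_diag {ε : ℝ} :
    ∀ (l : List V) (a : V) (y : V → V → ℝ),
      List.Chain Ne a l → ∀ i, dec ε a l y i i = y i i := by
  intro l
  induction l with
  | nil => intro a y _ i; simp [dec]
  | cons b l ih =>
      intro a y hch i
      rcases hch with _ | _ | ⟨hab, hch⟩
      show dec ε b l (tweak ε a b y) i i = y i i
      rw [ih b _ hch i]
      unfold tweak
      split
      · rename_i h'; exact absurd (h'.1.symm.trans h'.2) hab
      · ring

lemma excess_dec (ε : ℝ) :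
    ∀ (l : List V) (a : V) (y : V → V → ℝ) (w : V),
      excess (dec ε a l y) w
        = excess y w + (if w = a then ε else 0)
            - (if w = (a :: l).getLast (List.cons_ne_nil a l) then ε else 0) := by
  intro l
  induction l with
  | nil => intro a y w; rcases eq_or_ne w a with h | h <;> simp [dec, h]
  | cons b l ih =>
      intro a y w
      have h1 : dec ε a (b :: l) y = dec ε b l (tweak ε a b y) := rfl
      rw [h1, ih b _ w, excess_tweak]
      have h2 : (a :: b :: l).getLast (List.cons_ne_nil a (b :: l))
          = (b :: l).getLast (List.cons_ne_nil b l) := List.getLast_cons _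
      rw [h2]; ring

lemma total_dec (ε : ℝ) :
    ∀ (l : List V) (a : V) (y : V → V → ℝ),
      ∑ i, ∑ j, dec ε a l y i j = (∑ i, ∑ j, y i j) - ε * l.length := by
  intro l
  induction l with
  | nil => intro a y; simp [dec]
  | cons b l ih =>
      intro a y
      have h1 : dec ε a (b :: l) y = dec ε b l (tweak ε a b y) := rfl
      rw [h1, ih b, total_tweak]
      simp [List.length_cons]; ring

end Dec

section Main
variable [Fintype V]
set_option linter.unusedSectionVars false

lemma sum_ite_zero' [DecidableEq V] (f : V → ℝ) (v : V) :
    (∑ j, if j = v then (0:ℝ) else f j) = (∑ j, f j) - f v := by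
  have h : ∀ j, (if j = v then (0:ℝ) else f j) = f j - (if j = v then f j else 0) := by
    intro j; split <;> simp
  simp only [h, Finset.sum_sub_distrib, Finset.sum_ite_eq', Finset.mem_univ, if_true]

lemma excess_offdiag [DecidableEq V] (y : V → V → ℝ) (v : V) :
    excess (fun i j => if i = j then 0 else y i j) v = excess y v := by
  unfold excess
  have h1 : (∑ j, if j = v then (0:ℝ) else y j v) = (∑ j, y j v) - y v v :=
    sum_ite_zero' (fun j => y j v) v
  have h2 : (∑ j, if v = j then (0:ℝ) else y v j) = (∑ j, y v j) - y v v := by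
    have : ∀ j, (if v = j then (0:ℝ) else y v j) = (if j = v then (0:ℝ) else y v j) := by
      intro j; simp [eq_comm]
    simp only [this]
    exact sum_ite_zero' (fun j => y v j) v
  simp only [h1, h2]; ring

lemma value_le [DecidableEq V] (u x : V → V → ℝ) (t : V) (hx : IsCapFeasible u x) :
    excess x t ≤ ∑ j, (if j = t then 0 else u j t) := by
  classical
  unfold excess
  rw [← Finset.sum_sub_distrib]
  apply Finset.sum_le_sum
  intro j _
  by_cases h : j = t
  · subst h; simp
  · have h1 := hx j t h
    have h2 := hx t j (Ne.symm h)
    simp only [h, if_false]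
    linarith

lemma exists_flow_ge (s t : V) (hst : s ≠ t) (u : V → V → ℝ)
    (x : V → V → ℝ) (hx : IsPreflow u s x) :
    ∃ f, IsFlow u s t f ∧ excess f t = excess x t := by
  classical
  set c := excess x t with hc
  set K : Set (V → V → ℝ) :=
    {y | (∀ i j, i ≠ j → 0 ≤ y i j ∧ y i j ≤ u i j) ∧ (∀ i, y i i = 0) ∧
         (∀ v, v ≠ s → 0 ≤ excess y v) ∧ excess y t = c} with hKdef
  have hKne : K.Nonempty := by
    refine ⟨fun i j => if i = j then 0 else x i j, ?_, ?_, ?_, ?_⟩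
    · intro i j hij; simp only [if_neg hij]; exact hx.1 i j hij
    · intro i; simp
    · intro v hv; rw [excess_offdiag]; exact hx.2 v hv
    · rw [excess_offdiag]
  have hcont : ∀ i j : V, Continuous fun y : V → V → ℝ => y i j :=
    fun i j => (continuous_apply j).comp (continuous_apply i)
  have hconte : ∀ v, Continuous fun y : V → V → ℝ => excess y v := by
    intro v
    unfold excess
    exact (continuous_finset_sum _ fun j _ => hcont j v).sub
      (continuous_finset_sum _ fun j _ => hcont v j)
  have hKcl : IsClosed K := by
    have hrw : K = (⋂ (i : V) (j : V), {y : V → V → ℝ | i ≠ j → 0 ≤ y i j ∧ y i j ≤ u i j}) ∩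
        ((⋂ i : V, {y : V → V → ℝ | y i i = 0}) ∩
          ((⋂ v : V, {y : V → V → ℝ | v ≠ s → 0 ≤ excess y v}) ∩
            {y : V → V → ℝ | excess y t = c})) := by
      ext y
      simp only [hKdef, Set.mem_setOf_eq, Set.mem_inter_iff, Set.mem_iInter]
    rw [hrw]
    refine IsClosed.inter ?_ (IsClosed.inter ?_ (IsClosed.inter ?_ ?_))
    · refine isClosed_iInter fun i => isClosed_iInter fun j => ?_
      by_cases h : i = j
      · simp only [h, ne_eq, not_true_eq_false, false_implies, Set.setOf_true]
        exact isClosed_univ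
      · have : {y : V → V → ℝ | i ≠ j → 0 ≤ y i j ∧ y i j ≤ u i j}
            = {y : V → V → ℝ | 0 ≤ y i j ∧ y i j ≤ u i j} := by
          ext; simp [h]
        rw [this]
        exact (isClosed_le continuous_const (hcont i j)).inter
          (isClosed_le (hcont i j) continuous_const)
    · exact isClosed_iInter fun i => isClosed_eq (hcont i i) continuous_const
    · refine isClosed_iInter fun v => ?_
      by_cases h : v = s
      · simp only [h, ne_eq, not_true_eq_false, false_implies, Set.setOf_true]
        exact isClosed_univ
      · have : {y : V → V → ℝ | v ≠ s → 0 ≤ excess y v}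
            = {y : V → V → ℝ | 0 ≤ excess y v} := by ext; simp [h]
        rw [this]
        exact isClosed_le continuous_const (hconte v)
    · exact isClosed_eq (hconte t) continuous_const
  have hKcp : IsCompact K := by
    have hbox : IsCompact
        (Set.univ.pi fun i : V => Set.univ.pi fun j : V => Set.Icc (0:ℝ) (max (u i j) 0)) :=
      isCompact_univ_pi fun i => isCompact_univ_pi fun j => isCompact_Icc
    refine hbox.of_isClosed_subset hKcl ?_
    rintro y ⟨hfeas, hdiag, -, -⟩
    rw [Set.mem_univ_pi]
    intro i
    rw [Set.mem_univ_pi]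
    intro j
    by_cases h : i = j
    · subst h
      constructor
      · exact le_of_eq (hdiag i).symm
      · rw [hdiag i]; exact le_max_right _ _
    · exact ⟨(hfeas i j h).1, le_trans (hfeas i j h).2 (le_max_left _ _)⟩
  obtain ⟨y, hyK, hymin⟩ := hKcp.exists_isMinOn hKne
    ((continuous_finset_sum _ fun i _ =>
      continuous_finset_sum _ fun j _ => hcont i j).continuousOn
        (f := fun y : V → V → ℝ => ∑ i, ∑ j, y i j))
  obtain ⟨hfeas, hdiag, hexc, hext⟩ := hyK
  have hnonneg : ∀ i j, 0 ≤ y i j := by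
    intro i j
    by_cases h : i = j
    · subst h; exact le_of_eq (hdiag i).symm
    · exact (hfeas i j h).1
  have hflow0 : ∀ v, v ≠ s → v ≠ t → excess y v = 0 := by
    intro v hvs hvt
    by_contra hne
    have hpos : 0 < excess y v := lt_of_le_of_ne (hexc v hvs) (Ne.symm hne)
    set R : V → V → Prop := fun p q => p ≠ q ∧ 0 < y p q with hR
    by_cases hreach : Relation.ReflTransGen R s v
    · obtain ⟨l, hchain, hlast⟩ := List.exists_isChain_cons_of_relationReflTransGen hreach
      have hlne : l ≠ [] := by
        rintro rfl
        simp only [List.getLast_singleton] at hlast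
        exact hvs hlast.symm
      have hlen : 0 < l.length := List.length_pos_iff.mpr hlne
      have hlenR : (0:ℝ) < (l.length : ℝ) := by exact_mod_cast hlen
      set P : Finset (V × V) := Finset.univ.filter (fun p => 0 < y p.1 p.2) with hP
      have hPne : P.Nonempty := by
        obtain ⟨b, l', rfl⟩ := List.exists_cons_of_ne_nil hlne
        rcases hchain with _ | _ | ⟨hsb, -⟩
        exact ⟨(s, b), Finset.mem_filter.mpr ⟨Finset.mem_univ _, hsb.2⟩⟩
      have hQne : (P.image (fun p => y p.1 p.2)).Nonempty := hPne.image _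
      set m := (P.image (fun p => y p.1 p.2)).min' hQne with hm
      have hmpos : 0 < m := by
        obtain ⟨p, hp, hpm⟩ :=
          Finset.mem_image.mp ((P.image (fun p => y p.1 p.2)).min'_mem hQne)
        rw [hP, Finset.mem_filter] at hp
        rw [hm]
        exact hpm ▸ hp.2
      have harc : ∀ p q, R p q → m ≤ y p q := fun p q hpq => by
        rw [hm]
        exact Finset.min'_le _ _ (Finset.mem_image.mpr
          ⟨(p, q), Finset.mem_filter.mpr ⟨Finset.mem_univ _, hpq.2⟩, rfl⟩)
      set ε := min (excess y v) (m / l.length) with hε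
      have hεpos : 0 < ε := lt_min hpos (div_pos hmpos hlenR)
      have hεle : ε * l.length ≤ m := by
        calc ε * l.length ≤ (m / l.length) * l.length :=
              mul_le_mul_of_nonneg_right (min_le_right _ _) hlenR.le
          _ = m := div_mul_cancel₀ m hlenR.ne'
      set y' := dec ε s l y with hy'
      have hch1 : List.Chain (fun p q => ε * l.length ≤ y p q) s l :=
        hchain.imp fun p q h => le_trans hεle (harc p q h)
      have hchNe : List.Chain Ne s l := hchain.imp fun p q h => h.1
      have h0 : ∀ i j, 0 ≤ y' i j := dec_nonneg hεpos.le l s y hch1 hnonneg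
      have hle : ∀ i j, y' i j ≤ y i j := fun i j => dec_le hεpos.le l s y i j
      have hdiag' : ∀ i, y' i i = 0 := fun i => (dec_diag l s y hchNe i).trans (hdiag i)
      have hexc' : ∀ w, excess y' w
          = excess y w + (if w = s then ε else 0) - (if w = v then ε else 0) := by
        intro w
        rw [hy', excess_dec]
        have : (s :: l).getLast (List.cons_ne_nil s l) = v := hlast
        rw [this]
      have hy'K : y' ∈ K := by
        refine ⟨fun i j hij => ⟨h0 i j, le_trans (hle i j) (hfeas i j hij).2⟩, hdiag', ?_, ?_⟩
        · intro w hw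
          rw [hexc' w, if_neg hw]
          by_cases hwv : w = v
          · rw [if_pos hwv]
            have h1 := min_le_left (excess y v) (m / (l.length : ℝ))
            rw [← hε] at h1
            rw [hwv]
            linarith
          · rw [if_neg hwv]
            have := hexc w hw
            linarith
        · rw [hexc' t, if_neg hst.symm, if_neg (Ne.symm hvt), hext]; ring
      have hmin := hymin hy'K
      simp only [Set.mem_setOf_eq] at hmin
      have htot : ∑ i, ∑ j, y' i j = (∑ i, ∑ j, y i j) - ε * l.length :=
        total_dec ε l s y
      have : (0:ℝ) < ε * l.length := by positivity
      have hmin' : (∑ i, ∑ j, y i j) ≤ ∑ i, ∑ j, y' i j := hmin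
      linarith
    · set S : Finset V := Finset.univ.filter (fun w => Relation.ReflTransGen R w v) with hS
      have hvS : v ∈ S := Finset.mem_filter.mpr ⟨Finset.mem_univ _, Relation.ReflTransGen.refl⟩
      have hsS : s ∉ S := by simp only [hS, Finset.mem_filter]; tauto
      have hcross1 : ∀ w ∈ S, ∀ j ∈ Sᶜ, y j w = 0 := by
        intro w hw j hj
        rw [Finset.mem_compl] at hj
        by_contra hne'
        have hpos' : 0 < y j w := lt_of_le_of_ne (hnonneg j w) (Ne.symm hne')
        have hjw : j ≠ w := by
          rintro rfl; exact hj hw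
        have hwv : Relation.ReflTransGen R w v := by
          rw [hS, Finset.mem_filter] at hw; exact hw.2
        have : Relation.ReflTransGen R j v := Relation.ReflTransGen.head ⟨hjw, hpos'⟩ hwv
        exact hj (by rw [hS, Finset.mem_filter]; exact ⟨Finset.mem_univ _, this⟩)
      have hsum_le : ∑ w ∈ S, excess y w ≤ 0 := by
        have e1 : ∀ w, (∑ j, y j w) = ∑ j ∈ S, y j w + ∑ j ∈ Sᶜ, y j w :=
          fun w => (Finset.sum_add_sum_compl S _).symm
        have e2 : ∀ w, (∑ j, y w j) = ∑ j ∈ S, y w j + ∑ j ∈ Sᶜ, y w j :=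
          fun w => (Finset.sum_add_sum_compl S _).symm
        have hsplit : ∑ w ∈ S, excess y w
            = (∑ w ∈ S, ∑ j ∈ Sᶜ, y j w) - (∑ w ∈ S, ∑ j ∈ Sᶜ, y w j) := by
          unfold excess
          rw [Finset.sum_sub_distrib]
          have c1 : ∑ w ∈ S, ∑ j, y j w
              = ∑ w ∈ S, ∑ j ∈ S, y j w + ∑ w ∈ S, ∑ j ∈ Sᶜ, y j w := by
            rw [← Finset.sum_add_distrib]
            exact Finset.sum_congr rfl fun w _ => e1 w
          have c2 : ∑ w ∈ S, ∑ j, y w j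
              = ∑ w ∈ S, ∑ j ∈ S, y w j + ∑ w ∈ S, ∑ j ∈ Sᶜ, y w j := by
            rw [← Finset.sum_add_distrib]
            exact Finset.sum_congr rfl fun w _ => e2 w
          rw [c1, c2]
          have c3 : ∑ w ∈ S, ∑ j ∈ S, y j w = ∑ w ∈ S, ∑ j ∈ S, y w j :=
            Finset.sum_comm
          rw [c3]; ring
        rw [hsplit]
        have z1 : ∑ w ∈ S, ∑ j ∈ Sᶜ, y j w = 0 :=
          Finset.sum_eq_zero fun w hw => Finset.sum_eq_zero fun j hj => hcross1 w hw j hj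
        have z2 : 0 ≤ ∑ w ∈ S, ∑ j ∈ Sᶜ, y w j :=
          Finset.sum_nonneg fun w _ => Finset.sum_nonneg fun j _ => hnonneg w j
        linarith
      have hsum_pos : 0 < ∑ w ∈ S, excess y w := by
        refine Finset.sum_pos' ?_ ⟨v, hvS, hpos⟩
        intro w hw
        refine hexc w ?_
        rintro rfl
        exact hsS hw
      linarith
  exact ⟨y, ⟨fun i j h => hfeas i j h, hflow0⟩, hext⟩

end Main

/-- The maximum value of an s-t preflow equals the maximum value of an s-t flow. -/
theorem max_preflow_value_eq_max_flow_value [Fintype V] (s t : V) (hst : s ≠ t)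
    (u : V → V → ℝ) (hu : ∀ i j, i ≠ j → 0 ≤ u i j) :
    sSup {r : ℝ | ∃ x : V → V → ℝ, IsPreflow u s x ∧ excess x t = r} =
      sSup {r : ℝ | ∃ x : V → V → ℝ, IsFlow u s t x ∧ excess x t = r} := by
  classical
  have hzero_feas : IsCapFeasible u (fun _ _ => 0) := fun i j hij => ⟨le_refl _, hu i j hij⟩
  have hzexc : ∀ v : V, excess (fun _ _ => (0:ℝ)) v = 0 := by intro v; simp [excess]
  have h0A : (0:ℝ) ∈ {r : ℝ | ∃ x : V → V → ℝ, IsPreflow u s x ∧ excess x t = r} :=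
    ⟨fun _ _ => 0, ⟨hzero_feas, fun v _ => le_of_eq (hzexc v).symm⟩, hzexc t⟩
  have h0B : (0:ℝ) ∈ {r : ℝ | ∃ x : V → V → ℝ, IsFlow u s t x ∧ excess x t = r} :=
    ⟨fun _ _ => 0, ⟨hzero_feas, fun v _ _ => hzexc v⟩, hzexc t⟩
  have hbddA : BddAbove {r : ℝ | ∃ x : V → V → ℝ, IsPreflow u s x ∧ excess x t = r} :=
    ⟨∑ j, (if j = t then 0 else u j t), by rintro r ⟨x, hx, rfl⟩; exact value_le u x t hx.1⟩
  have hbddB : BddAbove {r : ℝ | ∃ x : V → V → ℝ, IsFlow u s t x ∧ excess x t = r} :=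
    ⟨∑ j, (if j = t then 0 else u j t), by rintro r ⟨x, hx, rfl⟩; exact value_le u x t hx.1⟩
  apply le_antisymm
  · apply csSup_le ⟨0, h0A⟩
    rintro r ⟨x, hx, rfl⟩
    obtain ⟨f, hf, hfe⟩ := exists_flow_ge s t hst u x hx
    exact le_csSup hbddB ⟨f, hf, hfe⟩
  · apply csSup_le ⟨0, h0B⟩
    rintro r ⟨f, hf, rfl⟩
    by_cases h : 0 ≤ excess f t
    · refine le_csSup hbddA ⟨f, ⟨hf.1, fun v hv => ?_⟩, rfl⟩
      by_cases hvt : v = t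
      · exact hvt ▸ h
      · exact le_of_eq (hf.2 v hv hvt).symm
    · exact le_trans (not_le.mp h).le (le_csSup hbddA h0A)
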